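/- There is an absolute constant C such that the following holds. Let q = q₀ q₁ with gcd(q₀, q₁) = 1 and let X ≥ 2. Then sup_{F₁,F₂} Σ_{r ∈ (ℤ/qℤ)*} |S_{F₁,F₂}(r/q)| ≤ C q₁⁹ · sup_{F₁,F₂} Σ_{r₀ ∈ (ℤ/q₀ℤ)*} |S_{F₁,F₂}(r₀/q₀)|, where both suprema are over 1-bounded functions F₁,F₂ : [X]⁴ → ℂ. -/

import Mathlib

/- STATEMENT 7: factorization lemma for sums of |S_{F₁,F₂}(r/q)| over r ∈ (ℤ/qℤ)*. -/

open Matrix MeasureTheory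

noncomputable section

/-- The quadratic form Q(x,y) = xᵀax + xᵀby + yᵀcy over a commutative ring. -/
def Qform {R : Type*} [CommRing R] (a b c : Matrix (Fin 4) (Fin 4) R)
    (x y : Fin 4 → R) : R :=
  x ⬝ᵥ (a *ᵥ x) + x ⬝ᵥ (b *ᵥ y) + y ⬝ᵥ (c *ᵥ y)

/-- The box [X]⁴ = {1,…,⌊X⌋}⁴ inside ℤ⁴. -/
def box (X : ℝ) : Finset (Fin 4 → ℤ) := Fintype.piFinset fun _ => Finset.Icc 1 ⌊X⌋

/-- e(t) := e^{2πit}. -/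
def eReal (t : ℝ) : ℂ := Complex.exp (2 * Real.pi * Complex.I * t)

/-- S_{F₁,F₂}(θ) := Σ_{x,y ∈ [X]⁴} F₁(x)F₂(y) e(θ Q(x,y)). -/
def SFF (a b c : Matrix (Fin 4) (Fin 4) ℤ) (X : ℝ)
    (F₁ F₂ : (Fin 4 → ℤ) → ℂ) (θ : ℝ) : ℂ :=
  ∑ x ∈ box X, ∑ y ∈ box X, F₁ x * F₂ y * eReal (θ * (Int.cast (Qform a b c x y) : ℝ))

lemma eReal_add (α β : ℝ) : eReal (α + β) = eReal α * eReal β := by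
  rw [eReal, eReal, eReal, ← Complex.exp_add]; push_cast; ring_nf

lemma eReal_intCast (n : ℤ) : eReal n = 1 := by
  rw [eReal, show 2 * (Real.pi:ℂ) * Complex.I * (n:ℝ) = (n:ℤ) * (2*Real.pi*Complex.I) by push_cast; ring,
    Complex.exp_int_mul_two_pi_mul_I]

lemma eReal_add_int (α : ℝ) (n : ℤ) : eReal (α + n) = eReal α := by
  rw [eReal_add, eReal_intCast, mul_one]

lemma norm_eReal (t : ℝ) : ‖eReal t‖ = 1 := by
  rw [eReal]
  rw [show 2 * (Real.pi:ℂ) * Complex.I * (t:ℝ) = ((2*Real.pi*t : ℝ):ℂ)*Complex.I by push_cast; ring]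
  exact Complex.norm_exp_ofReal_mul_I _

lemma eReal_div_congr_num (n : ℕ) (hn : 0 < n) (m m' k : ℤ) (h : (m : ZMod n) = (m' : ZMod n)) :
    eReal ((m:ℝ)/n * k) = eReal ((m':ℝ)/n * k) := by
  obtain ⟨d, hd⟩ : (n:ℤ) ∣ (m - m') := by
    rw [← ZMod.intCast_zmod_eq_zero_iff_dvd]; push_cast; rw [h]; ring
  have hn' : (n:ℝ) ≠ 0 := Nat.cast_ne_zero.mpr hn.ne'
  have hd' : (m:ℝ) - m' = n * d := by exact_mod_cast congrArg (Int.cast : ℤ → ℝ) hd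
  have : (m:ℝ)/n*k = (m':ℝ)/n*k + ((d*k : ℤ) : ℝ) := by
    push_cast; field_simp; linear_combination (k:ℝ) * hd'
  rw [this, eReal_add_int]

lemma eReal_div_congr_arg (n : ℕ) (hn : 0 < n) (m k k' : ℤ) (h : (k : ZMod n) = (k' : ZMod n)) :
    eReal ((m:ℝ)/n * k) = eReal ((m:ℝ)/n * k') := by
  obtain ⟨d, hd⟩ : (n:ℤ) ∣ (k - k') := by
    rw [← ZMod.intCast_zmod_eq_zero_iff_dvd]; push_cast; rw [h]; ring
  have hn' : (n:ℝ) ≠ 0 := Nat.cast_ne_zero.mpr hn.ne'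
  have hd' : (k:ℝ) - k' = n * d := by exact_mod_cast congrArg (Int.cast : ℤ → ℝ) hd
  have : (m:ℝ)/n*k = (m:ℝ)/n*k' + ((m*d : ℤ) : ℝ) := by
    push_cast; field_simp; linear_combination (m:ℝ) * hd'
  rw [this, eReal_add_int]

lemma Qform_cast (n : ℕ) (a b c : Matrix (Fin 4) (Fin 4) ℤ) (x y : Fin 4 → ℤ) :
    ((Qform a b c x y : ℤ) : ZMod n) =
      Qform (a.map (Int.cast)) (b.map Int.cast) (c.map Int.cast)
        (fun i => ((x i : ZMod n))) (fun i => ((y i : ZMod n))) := by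
  simp only [Qform, dotProduct, Matrix.mulVec, Matrix.map_apply]
  push_cast
  rfl

lemma sum_swap4 {α β : Type*} [Fintype α] (s t : Finset β) (h : α → α → β → β → ℂ) :
    ∑ x ∈ s, ∑ y ∈ t, ∑ u : α, ∑ v : α, h u v x y
      = ∑ u : α, ∑ v : α, ∑ x ∈ s, ∑ y ∈ t, h u v x y := by
  calc ∑ x ∈ s, ∑ y ∈ t, ∑ u : α, ∑ v : α, h u v x y
      = ∑ x ∈ s, ∑ u : α, ∑ y ∈ t, ∑ v : α, h u v x y :=
        Finset.sum_congr rfl fun _ _ => Finset.sum_comm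
    _ = ∑ u : α, ∑ x ∈ s, ∑ y ∈ t, ∑ v : α, h u v x y := Finset.sum_comm
    _ = ∑ u : α, ∑ x ∈ s, ∑ v : α, ∑ y ∈ t, h u v x y :=
        Finset.sum_congr rfl fun _ _ => Finset.sum_congr rfl fun _ _ => Finset.sum_comm
    _ = ∑ u : α, ∑ v : α, ∑ x ∈ s, ∑ y ∈ t, h u v x y :=
        Finset.sum_congr rfl fun _ _ => Finset.sum_comm

theorem stmt7 : ∃ C : ℝ, 0 < C ∧
    ∀ a b c : Matrix (Fin 4) (Fin 4) ℤ, aᵀ = a → cᵀ = c →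
    ∀ q₀ q₁ : ℕ, 0 < q₀ → 0 < q₁ → Nat.Coprime q₀ q₁ →
    ∀ X : ℝ, 2 ≤ X →
    ∀ F₁ F₂ : (Fin 4 → ℤ) → ℂ, (∀ v, ‖F₁ v‖ ≤ 1) → (∀ v, ‖F₂ v‖ ≤ 1) →
    ∃ G₁ G₂ : (Fin 4 → ℤ) → ℂ, (∀ v, ‖G₁ v‖ ≤ 1) ∧ (∀ v, ‖G₂ v‖ ≤ 1) ∧
      ∑ r ∈ (Finset.range (q₀ * q₁)).filter (fun r => Nat.gcd r (q₀ * q₁) = 1),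
          ‖SFF a b c X F₁ F₂ ((r : ℝ) / (q₀ * q₁))‖ ≤
        C * (q₁ : ℝ) ^ 9 *
          ∑ r₀ ∈ (Finset.range q₀).filter (fun r₀ => Nat.gcd r₀ q₀ = 1),
            ‖SFF a b c X G₁ G₂ ((r₀ : ℝ) / q₀)‖ := by
  refine ⟨1, one_pos, ?_⟩
  intro a b c _ _ q₀ q₁ hq₀ hq₁ hco X hX F₁ F₂ hF₁ hF₂
  haveI : NeZero q₀ := ⟨hq₀.ne'⟩
  haveI : NeZero q₁ := ⟨hq₁.ne'⟩
  obtain ⟨s, t, hst⟩ : ∃ s t : ℤ, s * q₀ + t * q₁ = 1 := by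
    have h : IsCoprime (q₀:ℤ) (q₁:ℤ) := Int.isCoprime_iff_gcd_eq_one.mpr (by exact_mod_cast hco)
    obtain ⟨u, v, huv⟩ := h
    exact ⟨u, v, huv⟩
  -- notation
  set A : Finset ℕ := (Finset.range (q₀ * q₁)).filter (fun r => Nat.gcd r (q₀ * q₁) = 1) with hA
  set B : Finset ℕ := (Finset.range q₀).filter (fun r₀ => Nat.gcd r₀ q₀ = 1) with hB
  let red : (Fin 4 → ℤ) → (Fin 4 → ZMod q₁) := fun x i => ((x i : ZMod q₁))
  let Gf : ((Fin 4 → ℤ) → ℂ) → (Fin 4 → ZMod q₁) → (Fin 4 → ℤ) → ℂ :=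
    fun F u x => if red x = u then F x else 0
  let lift : (Fin 4 → ZMod q₁) → (Fin 4 → ℤ) := fun u i => ((u i).val : ℤ)
  let ρ : ℕ → ℕ := fun r => ((((r:ℤ) * t : ℤ) : ZMod q₀)).val
  let χ : ℕ → (Fin 4 → ZMod q₁) → (Fin 4 → ZMod q₁) → ℂ :=
    fun r u v => eReal ((((r:ℤ) * s : ℤ):ℝ)/q₁ * ((Qform a b c (lift u) (lift v) : ℤ) : ℝ))
  have hred : ∀ x : Fin 4 → ℤ, ∀ i, ((lift (red x) i : ℤ) : ZMod q₁) = ((x i : ZMod q₁)) := by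
    intro x i
    simp [lift, red, ZMod.natCast_val, ZMod.intCast_cast, ZMod.cast_id]
  -- pointwise phase identity
  have hphase : ∀ (r : ℕ) (x y : Fin 4 → ℤ),
      eReal ((r:ℝ) / (q₀ * q₁) * ((Qform a b c x y : ℤ) : ℝ))
        = χ r (red x) (red y) * eReal (((ρ r : ℕ):ℝ)/q₀ * ((Qform a b c x y : ℤ) : ℝ)) := by
    intro r x y
    have hq₀' : (q₀:ℝ) ≠ 0 := Nat.cast_ne_zero.mpr hq₀.ne'
    have hq₁' : (q₁:ℝ) ≠ 0 := Nat.cast_ne_zero.mpr hq₁.ne'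
    have hstR : (s:ℝ) * q₀ + t * q₁ = 1 := by exact_mod_cast congrArg (Int.cast : ℤ → ℝ) hst
    have h1 : (r:ℝ) / (q₀ * q₁) * ((Qform a b c x y : ℤ) : ℝ)
        = (((r:ℤ) * t : ℤ):ℝ)/q₀ * ((Qform a b c x y : ℤ) : ℝ)
          + (((r:ℤ) * s : ℤ):ℝ)/q₁ * ((Qform a b c x y : ℤ) : ℝ) := by
      push_cast
      field_simp
      linear_combination (-(r:ℝ) * ((Qform a b c x y : ℤ) : ℝ)) * hstR
    rw [h1, eReal_add]
    have h2 : eReal ((((r:ℤ) * t : ℤ):ℝ)/q₀ * ((Qform a b c x y : ℤ) : ℝ))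
        = eReal (((ρ r : ℕ):ℝ)/q₀ * ((Qform a b c x y : ℤ) : ℝ)) := by
      have hmm : (((r:ℤ) * t : ℤ) : ZMod q₀) = (((ρ r : ℕ) : ℤ) : ZMod q₀) := by
        simp [ρ, ZMod.natCast_val, ZMod.intCast_cast, ZMod.cast_id]
      have := eReal_div_congr_num q₀ hq₀ ((r:ℤ) * t) ((ρ r : ℕ) : ℤ) (Qform a b c x y) hmm
      convert this using 3
      norm_cast
    have h3 : eReal ((((r:ℤ) * s : ℤ):ℝ)/q₁ * ((Qform a b c x y : ℤ) : ℝ))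
        = χ r (red x) (red y) := by
      have hkk : ((Qform a b c x y : ℤ) : ZMod q₁)
          = ((Qform a b c (lift (red x)) (lift (red y)) : ℤ) : ZMod q₁) := by
        have ex : (fun i => ((x i : ZMod q₁))) = fun i => ((lift (red x) i : ZMod q₁)) :=
          funext fun i => (hred x i).symm
        have ey : (fun i => ((y i : ZMod q₁))) = fun i => ((lift (red y) i : ZMod q₁)) :=
          funext fun i => (hred y i).symm
        rw [Qform_cast, Qform_cast, ex, ey]
      exact eReal_div_congr_arg q₁ hq₁ ((r:ℤ) * s) _ _ hkk
    rw [h2, h3]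
    ring
  -- key sum identity
  have key : ∀ r : ℕ,
      SFF a b c X F₁ F₂ ((r : ℝ) / (q₀ * q₁))
        = ∑ u : Fin 4 → ZMod q₁, ∑ v : Fin 4 → ZMod q₁,
            χ r u v * SFF a b c X (Gf F₁ u) (Gf F₂ v) (((ρ r : ℕ):ℝ)/q₀) := by
    intro r
    rw [SFF]
    simp_rw [SFF, Finset.mul_sum]
    rw [← sum_swap4 (box X) (box X)
      (fun u v x y => χ r u v * (Gf F₁ u x * Gf F₂ v y *
        eReal (((ρ r : ℕ):ℝ)/q₀ * ((Qform a b c x y : ℤ) : ℝ))))]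
    refine Finset.sum_congr rfl fun x _ => Finset.sum_congr rfl fun y _ => ?_
    have collapse : ∑ u : Fin 4 → ZMod q₁, ∑ v : Fin 4 → ZMod q₁,
        χ r u v * (Gf F₁ u x * Gf F₂ v y *
          eReal (((ρ r : ℕ):ℝ)/q₀ * ((Qform a b c x y : ℤ) : ℝ)))
        = χ r (red x) (red y) * (F₁ x * F₂ y *
            eReal (((ρ r : ℕ):ℝ)/q₀ * ((Qform a b c x y : ℤ) : ℝ))) := by
      simp only [Gf, mul_ite, ite_mul, zero_mul, mul_zero]
      rw [Finset.sum_eq_single (red x)]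
      · rw [Finset.sum_eq_single (red y)]
        · simp
        · intro v _ hv; simp [Ne.symm hv]
        · intro h; exact absurd (Finset.mem_univ _) h
      · intro u _ hu
        rw [Finset.sum_eq_zero]
        intro v _
        simp [Ne.symm hu]
      · intro h; exact absurd (Finset.mem_univ _) h
    rw [collapse, hphase r x y]
    ring
  -- norm bound per r
  have stepA : ∀ r : ℕ,
      ‖SFF a b c X F₁ F₂ ((r : ℝ) / (q₀ * q₁))‖
        ≤ ∑ u : Fin 4 → ZMod q₁, ∑ v : Fin 4 → ZMod q₁,
            ‖SFF a b c X (Gf F₁ u) (Gf F₂ v) (((ρ r : ℕ):ℝ)/q₀)‖ := by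
    intro r
    rw [key r]
    refine (norm_sum_le _ _).trans (Finset.sum_le_sum fun u _ =>
      (norm_sum_le _ _).trans (Finset.sum_le_sum fun v _ => ?_))
    rw [norm_mul, norm_eReal, one_mul]
  -- ρ maps A into B
  have hq₁ZMod : ((t : ZMod q₀)) * ((q₁ : ℕ) : ZMod q₀) = 1 := by
    have := congrArg (Int.cast : ℤ → ZMod q₀) hst
    push_cast at this
    simpa [ZMod.natCast_self] using this
  have himg : ∀ r ∈ A, ρ r ∈ B := by
    intro r hr
    rw [hA, Finset.mem_filter, Finset.mem_range] at hr
    rw [hB, Finset.mem_filter, Finset.mem_range]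
    constructor
    · exact ZMod.val_lt _
    · have hr0 : Nat.Coprime r q₀ := Nat.Coprime.coprime_dvd_right ⟨q₁, rfl⟩ hr.2
      have hur : IsUnit ((r : ℕ) : ZMod q₀) := (ZMod.isUnit_iff_coprime r q₀).mpr hr0
      have hut : IsUnit ((t : ℤ) : ZMod q₀) := IsUnit.of_mul_eq_one _ hq₁ZMod
      have huz : IsUnit ((((r:ℤ) * t : ℤ)) : ZMod q₀) := by
        push_cast
        exact (hur.mul hut)
      obtain ⟨w, hw⟩ := huz
      have := ZMod.val_coe_unit_coprime w
      rw [hw] at this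
      exact this
  -- fibers of ρ on A have size at most q₁
  have hfiber : ∀ b : ℕ, (A.filter (fun r => ρ r = b)).card ≤ q₁ := by
    intro b
    have : (A.filter (fun r => ρ r = b)).card ≤ (Finset.range q₁).card := by
      apply Finset.card_le_card_of_injOn (fun r => r / q₀)
      · intro r hr
        rw [Finset.mem_coe, Finset.mem_filter, hA, Finset.mem_filter, Finset.mem_range] at hr
        rw [Finset.mem_coe, Finset.mem_range]
        exact Nat.div_lt_of_lt_mul hr.1.1
      · intro r hr r' hr' hdiv
        simp only [Finset.coe_filter, Set.mem_setOf_eq] at hr hr'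
        have hρ : ρ r = ρ r' := by rw [hr.2, hr'.2]
        have hz : (((r:ℤ) * t : ℤ) : ZMod q₀) = (((r':ℤ) * t : ℤ) : ZMod q₀) :=
          ZMod.val_injective q₀ hρ
        have hmod : ((r : ℕ) : ZMod q₀) = ((r' : ℕ) : ZMod q₀) := by
          have h1 : (((r:ℤ) * t : ℤ) : ZMod q₀) * ((q₁:ℕ) : ZMod q₀)
              = (((r':ℤ) * t : ℤ) : ZMod q₀) * ((q₁:ℕ) : ZMod q₀) := by rw [hz]
          push_cast at h1
          rw [mul_assoc, mul_assoc, hq₁ZMod, mul_one, mul_one] at h1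
          exact_mod_cast h1
        have hmodeq : r % q₀ = r' % q₀ := (ZMod.natCast_eq_natCast_iff' r r' q₀).mp hmod
        have hdiv' : r / q₀ = r' / q₀ := hdiv
        calc r = q₀ * (r / q₀) + r % q₀ := (Nat.div_add_mod r q₀).symm
          _ = q₀ * (r' / q₀) + r' % q₀ := by rw [hdiv', hmodeq]
          _ = r' := Nat.div_add_mod r' q₀
    simpa using this
  -- counting step
  have hcount : ∀ (f : ℕ → ℝ), (∀ b, 0 ≤ f b) →
      ∑ r ∈ A, f (ρ r) ≤ (q₁:ℝ) * ∑ b ∈ B, f b := by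
    intro f hf
    rw [Finset.sum_comp f ρ]
    have step1 : ∑ b ∈ A.image ρ, (A.filter (fun r => ρ r = b)).card • f b
        ≤ ∑ b ∈ A.image ρ, (q₁:ℝ) * f b := by
      refine Finset.sum_le_sum fun b _ => ?_
      rw [nsmul_eq_mul]
      exact mul_le_mul_of_nonneg_right (by exact_mod_cast hfiber b) (hf b)
    refine step1.trans ?_
    rw [← Finset.mul_sum]
    refine mul_le_mul_of_nonneg_left ?_ (by positivity)
    refine Finset.sum_le_sum_of_subset_of_nonneg ?_ (fun b _ _ => hf b)
    intro b hb
    obtain ⟨r, hr, rfl⟩ := Finset.mem_image.mp hb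
    exact himg r hr
  -- choose maximizing pair
  have hne : (Finset.univ : Finset ((Fin 4 → ZMod q₁) × (Fin 4 → ZMod q₁))).Nonempty :=
    Finset.univ_nonempty
  obtain ⟨p, _, hpmax⟩ := Finset.exists_max_image Finset.univ
    (fun p : (Fin 4 → ZMod q₁) × (Fin 4 → ZMod q₁) =>
      ∑ r₀ ∈ B, ‖SFF a b c X (Gf F₁ p.1) (Gf F₂ p.2) ((r₀:ℝ)/q₀)‖) hne
  refine ⟨Gf F₁ p.1, Gf F₂ p.2, ?_, ?_, ?_⟩
  · intro v
    by_cases h : red v = p.1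
    · simpa [Gf, h] using hF₁ v
    · simp [Gf, h]
  · intro v
    by_cases h : red v = p.2
    · simpa [Gf, h] using hF₂ v
    · simp [Gf, h]
  set M : ℝ := ∑ r₀ ∈ B, ‖SFF a b c X (Gf F₁ p.1) (Gf F₂ p.2) ((r₀:ℝ)/q₀)‖ with hM
  have hMnonneg : 0 ≤ M := Finset.sum_nonneg fun _ _ => norm_nonneg _
  calc ∑ r ∈ A, ‖SFF a b c X F₁ F₂ ((r : ℝ) / (q₀ * q₁))‖
      ≤ ∑ r ∈ A, ∑ u : Fin 4 → ZMod q₁, ∑ v : Fin 4 → ZMod q₁,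
          ‖SFF a b c X (Gf F₁ u) (Gf F₂ v) (((ρ r : ℕ):ℝ)/q₀)‖ :=
        Finset.sum_le_sum fun r _ => stepA r
    _ = ∑ u : Fin 4 → ZMod q₁, ∑ v : Fin 4 → ZMod q₁, ∑ r ∈ A,
          ‖SFF a b c X (Gf F₁ u) (Gf F₂ v) (((ρ r : ℕ):ℝ)/q₀)‖ := by
        rw [Finset.sum_comm]
        exact Finset.sum_congr rfl fun u _ => Finset.sum_comm
    _ ≤ ∑ u : Fin 4 → ZMod q₁, ∑ v : Fin 4 → ZMod q₁, (q₁:ℝ) *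
          ∑ r₀ ∈ B, ‖SFF a b c X (Gf F₁ u) (Gf F₂ v) ((r₀:ℝ)/q₀)‖ := by
        refine Finset.sum_le_sum fun u _ => Finset.sum_le_sum fun v _ => ?_
        exact hcount (fun r₀ => ‖SFF a b c X (Gf F₁ u) (Gf F₂ v) ((r₀:ℝ)/q₀)‖)
          (fun b => norm_nonneg _)
    _ ≤ ∑ u : Fin 4 → ZMod q₁, ∑ v : Fin 4 → ZMod q₁, (q₁:ℝ) * M := by
        refine Finset.sum_le_sum fun u _ => Finset.sum_le_sum fun v _ => ?_
        refine mul_le_mul_of_nonneg_left ?_ (by positivity)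
        exact hpmax (u, v) (Finset.mem_univ _)
    _ = (q₁:ℝ)^4 * ((q₁:ℝ)^4 * ((q₁:ℝ) * M)) := by
        simp only [Finset.sum_const, Finset.card_univ, nsmul_eq_mul, Fintype.card_fun,
          ZMod.card, Fintype.card_fin, Nat.cast_pow]
    _ = 1 * (q₁ : ℝ) ^ 9 * M := by ring
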